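/- Let X ⊂ ℝ^d be a compact domain with positive Lebesgue measure and let Leb be the Lebesgue measure restricted to X, normalized to total mass 1. Then there exists c > 0, depending only on X and d, such that for every N ≥ 1 and every probability measure ν on ℝ^d supported on at most N points, W₂(Leb, ν) ≥ c·N^{−1/d}. -/

import Mathlib

open MeasureTheory
open scoped ENNReal NNReal

noncomputable section

abbrev Euc (d : ℕ) := EuclideanSpace ℝ (Fin d)

/-- Squared quadratic Wasserstein distance: infimum, over couplings `π` of `η` and `ν`,
of `∫ edist(x,y)² dπ`. -/
def W2sq {α : Type*} [MeasurableSpace α] [PseudoEMetricSpace α] (η ν : Measure α) : ℝ≥0∞ :=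
  ⨅ (π : Measure (α × α)) (_ : π.map Prod.fst = η ∧ π.map Prod.snd = ν),
    ∫⁻ p, edist p.1 p.2 ^ 2 ∂π

/-- If `X ⊂ ℝ^d` is a compact domain of positive Lebesgue measure and `Leb`
is the normalized Lebesgue measure on `X`, then there is `c > 0` (depending only on `X`, `d`)
such that `W₂(Leb, ν) ≥ c·N^{−1/d}` for every probability measure `ν` supported on at most `N`
points. -/
theorem stmt_15 (d : ℕ) (hd : 1 ≤ d) (X : Set (Euc d)) (hX : IsCompact X)
    (hXpos : 0 < volume X)
    (Leb : Measure (Euc d)) (hLeb : Leb = (volume X)⁻¹ • volume.restrict X) :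
    ∃ c : ℝ, 0 < c ∧ ∀ N : ℕ, 1 ≤ N → ∀ ν : Measure (Euc d), IsProbabilityMeasure ν →
      (∃ F : Finset (Euc d), F.card ≤ N ∧ ν (↑F : Set (Euc d))ᶜ = 0) →
      ENNReal.ofReal (c * (N : ℝ) ^ (-(1 : ℝ) / d)) ^ 2 ≤ W2sq Leb ν := by
  haveI : Nonempty (Fin d) := ⟨⟨0, hd⟩⟩
  haveI : Nontrivial (Euc d) := inferInstance
  set B : ℝ≥0∞ := volume (Metric.ball (0 : Euc d) 1) with hBdef
  have hBfin : B ≠ ∞ := measure_ball_lt_top.ne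
  have hXfin : volume X ≠ ∞ := hX.measure_lt_top.ne
  set K : ℝ≥0∞ := B * (volume X)⁻¹ with hKdef
  have hKfin : K ≠ ∞ := ENNReal.mul_ne_top hBfin (ENNReal.inv_ne_top.mpr hXpos.ne')
  have hKt : 0 ≤ K.toReal := ENNReal.toReal_nonneg
  set t : ℝ := 1 / (2 * (K.toReal + 1)) with htdef
  have ht : 0 < t := by positivity
  set a : ℝ := min 1 t with hadef
  have ha : 0 < a := lt_min one_pos ht
  have hKey : ENNReal.ofReal (a ^ d) * K ≤ 1 / 2 := by
    have h1 : a ^ d ≤ t := by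
      calc a ^ d ≤ a ^ 1 := pow_le_pow_of_le_one ha.le (min_le_left _ _) hd
      _ = a := pow_one a
      _ ≤ t := min_le_right _ _
    calc ENNReal.ofReal (a ^ d) * K ≤ ENNReal.ofReal t * ENNReal.ofReal K.toReal := by
          rw [ENNReal.ofReal_toReal hKfin]
          exact mul_le_mul_left (ENNReal.ofReal_le_ofReal h1) _
      _ = ENNReal.ofReal (t * K.toReal) := (ENNReal.ofReal_mul ht.le).symm
      _ ≤ ENNReal.ofReal (1 / 2) := by
          apply ENNReal.ofReal_le_ofReal
          rw [htdef, div_mul_eq_mul_div, one_mul, div_le_iff₀ (by positivity)]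
          linarith
      _ = 1 / 2 := by norm_num [ENNReal.ofReal_div_of_pos]
  refine ⟨a / 2, by positivity, ?_⟩
  intro N hN ν hν ⟨F, hFcard, hFsupp⟩
  have hN0 : (N : ℝ) ≠ 0 := Nat.cast_ne_zero.mpr (by omega)
  set s : ℝ := (N : ℝ) ^ (-(1 : ℝ) / d) with hsdef
  have hs : 0 < s := Real.rpow_pos_of_pos (by positivity) _
  set r : ℝ := a * s with hrdef
  have hr : 0 < r := mul_pos ha hs
  have hsd : s ^ d = (N : ℝ)⁻¹ := by
    rw [hsdef, ← Real.rpow_natCast ((N:ℝ) ^ (-(1:ℝ)/d)) d, ← Real.rpow_mul (by positivity)]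
    rw [div_mul_cancel₀ _ (by exact_mod_cast (by omega : d ≠ 0)), Real.rpow_neg_one]
  -- Leb is a probability measure
  have hLebuniv : Leb Set.univ = 1 := by
    rw [hLeb]
    simp only [Measure.smul_apply, smul_eq_mul, Measure.restrict_apply MeasurableSet.univ,
      Set.univ_inter]
    exact ENNReal.inv_mul_cancel hXpos.ne' hXfin
  -- the far set
  set S : Set (Euc d) := {x | ENNReal.ofReal r ≤ EMetric.infEdist x (↑F : Set (Euc d))} with hSdef
  have hinfEdist_meas : Measurable fun x : Euc d => EMetric.infEdist x (↑F : Set (Euc d)) :=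
    EMetric.continuous_infEdist.measurable
  have hSmeas : MeasurableSet S := hinfEdist_meas measurableSet_Ici
  -- bound on the near set
  have hnear : Leb Sᶜ ≤ 1 / 2 := by
    have hsub : Sᶜ ∩ X ⊆ ⋃ y ∈ F, Metric.ball y r := by
      rintro x ⟨hxS, -⟩
      simp only [hSdef, Set.mem_compl_iff, Set.mem_setOf_eq, not_le] at hxS
      obtain ⟨y, hyF, hxy⟩ := EMetric.infEdist_lt_iff.mp hxS
      exact Set.mem_biUnion hyF (by simpa [Metric.mem_ball, dist_comm] using edist_lt_ofReal.mp hxy)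
    have hball : ∀ y : Euc d, volume (Metric.ball y r) = ENNReal.ofReal (r ^ d) * B := by
      intro y
      rw [Measure.addHaar_ball volume y hr.le, finrank_euclideanSpace_fin]
    have hvol : volume (Sᶜ ∩ X) ≤ (N : ℝ≥0∞) * (ENNReal.ofReal (r ^ d) * B) := by
      calc volume (Sᶜ ∩ X) ≤ volume (⋃ y ∈ F, Metric.ball y r) := measure_mono hsub
        _ ≤ ∑ y ∈ F, volume (Metric.ball y r) := measure_biUnion_finset_le F _
        _ = F.card * (ENNReal.ofReal (r ^ d) * B) := by
            simp [hball, Finset.sum_const, nsmul_eq_mul]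
        _ ≤ (N : ℝ≥0∞) * (ENNReal.ofReal (r ^ d) * B) := by
            exact mul_le_mul_left (by exact_mod_cast hFcard) _
    have hrd : ENNReal.ofReal (r ^ d) = ENNReal.ofReal (a ^ d) * (N : ℝ≥0∞)⁻¹ := by
      rw [hrdef, mul_pow, hsd, ENNReal.ofReal_mul (by positivity),
        ENNReal.ofReal_inv_of_pos (by positivity), ENNReal.ofReal_natCast]
    calc Leb Sᶜ = (volume X)⁻¹ * volume (Sᶜ ∩ X) := by
          rw [hLeb]
          simp [Measure.restrict_apply hSmeas.compl]
      _ ≤ (volume X)⁻¹ * ((N : ℝ≥0∞) * (ENNReal.ofReal (r ^ d) * B)) :=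
          mul_le_mul_right hvol _
      _ = ENNReal.ofReal (a ^ d) * K * ((N : ℝ≥0∞) * (N : ℝ≥0∞)⁻¹) := by
          rw [hrd, hKdef]; ring
      _ = ENNReal.ofReal (a ^ d) * K := by
          rw [ENNReal.mul_inv_cancel (by exact_mod_cast hN0) (ENNReal.natCast_ne_top N), mul_one]
      _ ≤ 1 / 2 := hKey
  have hfar : 1 / 2 ≤ Leb S := by
    have h1 : (1 : ℝ≥0∞) = Leb S + Leb Sᶜ := by rw [measure_add_measure_compl hSmeas, hLebuniv]
    have h2 : 1 / 2 + 1 / 2 ≤ Leb S + 1 / 2 := by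
      rw [ENNReal.add_halves]
      exact h1.le.trans (add_le_add_right hnear _)
    exact (ENNReal.add_le_add_iff_right (by norm_num)).mp h2
  -- main bound via any coupling
  rw [W2sq]
  refine le_iInf fun π => le_iInf fun hπ => ?_
  obtain ⟨hπ1, hπ2⟩ := hπ
  set g : Euc d → ℝ≥0∞ := fun x => EMetric.infEdist x (↑F : Set (Euc d)) ^ 2 with hgdef
  have hg : Measurable g := hinfEdist_meas.pow_const 2
  have hmem : ∀ᵐ p ∂π, p.2 ∈ (↑F : Set (Euc d)) := by
    have hFm : MeasurableSet (↑F : Set (Euc d))ᶜ := F.finite_toSet.isClosed.measurableSet.compl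
    have : π (Prod.snd ⁻¹' (↑F : Set (Euc d))ᶜ) = 0 := by
      rw [← Measure.map_apply measurable_snd hFm, hπ2]; exact hFsupp
    exact this
  have step1 : ∫⁻ p, g p.1 ∂π ≤ ∫⁻ p, edist p.1 p.2 ^ 2 ∂π := by
    refine lintegral_mono_ae (hmem.mono fun p hp => ?_)
    exact pow_le_pow_left₀ zero_le (EMetric.infEdist_le_edist_of_mem hp) 2
  have step2 : ∫⁻ x, g x ∂Leb = ∫⁻ p, g p.1 ∂π := by
    rw [← hπ1, lintegral_map hg measurable_fst]
  have step3 : ENNReal.ofReal r ^ 2 * (1 / 2) ≤ ∫⁻ x, g x ∂Leb := by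
    have hmarkov := mul_meas_ge_le_lintegral₀ (μ := Leb) hg.aemeasurable (ENNReal.ofReal r ^ 2)
    refine le_trans ?_ hmarkov
    apply mul_le_mul_right
    refine hfar.trans (measure_mono fun x hx => ?_)
    simp only [hSdef, Set.mem_setOf_eq] at hx
    exact pow_le_pow_left₀ zero_le hx 2
  have final : ENNReal.ofReal (a / 2 * s) ^ 2 ≤ ENNReal.ofReal r ^ 2 * (1 / 2) := by
    have h1 : ENNReal.ofReal (a / 2 * s) ^ 2 = ENNReal.ofReal ((a / 2 * s) ^ 2) :=
      (ENNReal.ofReal_pow (by positivity) 2).symm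
    have h2 : ENNReal.ofReal r ^ 2 * (1 / 2) = ENNReal.ofReal (r ^ 2 * (1 / 2)) := by
      rw [← ENNReal.ofReal_pow hr.le, ENNReal.ofReal_mul (by positivity : (0:ℝ) ≤ r ^ 2)]
      norm_num [ENNReal.ofReal_div_of_pos]
    rw [h1, h2]
    apply ENNReal.ofReal_le_ofReal
    rw [hrdef]; nlinarith [sq_nonneg (a * s)]
  calc ENNReal.ofReal (a / 2 * s) ^ 2 ≤ ENNReal.ofReal r ^ 2 * (1 / 2) := final
    _ ≤ ∫⁻ x, g x ∂Leb := step3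
    _ = ∫⁻ p, g p.1 ∂π := step2
    _ ≤ ∫⁻ p, edist p.1 p.2 ^ 2 ∂π := step1

end
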